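/- Let G be a finite simple graph on n ≥ 1 vertices. Then avd(G) ≥ n·2^{n−1}/(2^n − 1), with equality if and only if G is isomorphic to the complete graph K_n. -/
import Mathlib

open Finset

/-- `S` is a dominating set of `G`: every vertex is in `S` or adjacent to a vertex of `S`. -/
def SimpleGraph.IsDomSet {V : Type*} (G : SimpleGraph V) (S : Finset V) : Prop :=
  ∀ v : V, v ∈ S ∨ ∃ u ∈ S, G.Adj u v

/-- The family of all dominating sets of `G`. -/
noncomputable def SimpleGraph.domSets {V : Type*} [Fintype V] (G : SimpleGraph V) :
    Finset (Finset V) :=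
  @Finset.filter _ (fun S => G.IsDomSet S) (Classical.decPred _) Finset.univ

/-- The average order (cardinality) of a dominating set of `G`. -/
noncomputable def SimpleGraph.avd {V : Type*} [Fintype V] (G : SimpleGraph V) : ℝ :=
  (∑ S ∈ G.domSets, (S.card : ℝ)) / (G.domSets).card

section Aux

open FinsetFamily

lemma sum_id_mul_choose (n : ℕ) : ∑ k ∈ range (n + 1), k * n.choose k = n * 2 ^ (n - 1) := by
  cases n with
  | zero => simp
  | succ m =>
    rw [Finset.sum_range_succ']
    simp only [Nat.zero_mul, Nat.add_zero, zero_mul, add_zero]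
    calc ∑ k ∈ range (m + 1), (k + 1) * (m + 1).choose (k + 1)
        = ∑ k ∈ range (m + 1), (m + 1) * m.choose k := by
          refine Finset.sum_congr rfl fun k _ => ?_
          rw [mul_comm, ← Nat.add_one_mul_choose_eq]
      _ = (m + 1) * 2 ^ m := by rw [← Finset.mul_sum, Nat.sum_range_choose]

variable {V : Type*} [Fintype V] [DecidableEq V] {G : SimpleGraph V}

lemma mem_domSets {S : Finset V} : S ∈ G.domSets ↔ G.IsDomSet S := by
  simp [SimpleGraph.domSets, Finset.mem_filter]

lemma domSets_upset {S T : Finset V} (hS : S ∈ G.domSets) (hST : S ⊆ T) : T ∈ G.domSets := by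
  rw [mem_domSets] at *
  intro v
  rcases hS v with h | ⟨u, hu, ha⟩
  · exact Or.inl (hST h)
  · exact Or.inr ⟨u, hST hu, ha⟩

lemma univ_mem_domSets : (univ : Finset V) ∈ G.domSets :=
  mem_domSets.2 fun v => Or.inl (mem_univ v)

lemma empty_notMem_domSets [Nonempty V] : (∅ : Finset V) ∉ G.domSets := by
  rw [mem_domSets]
  intro h
  obtain ⟨v⟩ := ‹Nonempty V›
  rcases h v with h | ⟨u, hu, _⟩
  · exact absurd h (notMem_empty v)
  · exact absurd hu (notMem_empty u)


lemma cheb_aux (R : Finset ℕ) (w d : ℕ → ℝ) (a b : ℕ) (ha : a ∈ R) (hb : b ∈ R)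
    (hnn : ∀ k ∈ R, ∀ l ∈ R, 0 ≤ w k * w l * ((d k - d l) * ((k : ℝ) - l))) :
    w a * w b * ((d a - d b) * ((a : ℝ) - b)) ≤
      2 * ((∑ k ∈ R, w k) * (∑ k ∈ R, w k * d k * k) -
           (∑ k ∈ R, w k * d k) * (∑ k ∈ R, w k * k)) := by
  have hrow : ∀ k, ∑ l ∈ R, w k * w l * ((d k - d l) * ((k : ℝ) - l))
      = (w k * d k * k) * (∑ l ∈ R, w l) - (w k * d k) * (∑ l ∈ R, w l * l)
        - (w k * k) * (∑ l ∈ R, w l * d l) + w k * (∑ l ∈ R, w l * d l * l) := by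
    intro k
    rw [mul_sum, mul_sum, mul_sum, mul_sum, ← sum_sub_distrib, ← sum_sub_distrib,
      ← sum_add_distrib]
    exact sum_congr rfl fun l _ => by ring
  have hQid : ∑ k ∈ R, ∑ l ∈ R, w k * w l * ((d k - d l) * ((k : ℝ) - l))
      = 2 * ((∑ k ∈ R, w k) * (∑ k ∈ R, w k * d k * k) -
             (∑ k ∈ R, w k * d k) * (∑ k ∈ R, w k * k)) := by
    rw [sum_congr rfl fun k _ => hrow k, sum_add_distrib, sum_sub_distrib, sum_sub_distrib,
      ← sum_mul, ← sum_mul, ← sum_mul, ← sum_mul]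
    ring
  rw [← hQid]
  calc w a * w b * ((d a - d b) * ((a : ℝ) - b))
      ≤ ∑ l ∈ R, w a * w l * ((d a - d l) * ((a : ℝ) - l)) :=
        single_le_sum (fun l hl => hnn a ha l hl) hb
    _ ≤ ∑ k ∈ R, ∑ l ∈ R, w k * w l * ((d k - d l) * ((k : ℝ) - l)) :=
        single_le_sum (fun k hk => sum_nonneg fun l hl => hnn k hk l hl) ha

/-- Core counting inequality, with strictness for non-complete graphs. -/
lemma avd_key (G : SimpleGraph V) (n : ℕ) (hn : n = Fintype.card V) (h1 : 1 ≤ n) :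
    (n : ℝ) * 2 ^ (n - 1) * (G.domSets.card : ℝ) ≤
        (∑ S ∈ G.domSets, (S.card : ℝ)) * ((2 : ℝ) ^ n - 1) ∧
      ((∃ v w : V, v ≠ w ∧ ¬G.Adj v w) →
        (n : ℝ) * 2 ^ (n - 1) * (G.domSets.card : ℝ) <
          (∑ S ∈ G.domSets, (S.card : ℝ)) * ((2 : ℝ) ^ n - 1)) := by
  have hne : Nonempty V := Fintype.card_pos_iff.1 (by omega)
  set F := G.domSets with hF
  set f : ℕ → ℝ := fun k => (({S ∈ F | S.card = k} : Finset (Finset V)).card : ℝ) with hf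
  set w : ℕ → ℝ := fun k => ((n.choose k : ℕ) : ℝ) with hwdef
  set d : ℕ → ℝ := fun k => f k / w k with hd
  have hw_pos : ∀ k, k ≤ n → 0 < w k := fun k hk => by
    simp only [hwdef]; exact_mod_cast Nat.choose_pos hk
  have hf_nonneg : ∀ k, 0 ≤ f k := fun k => Nat.cast_nonneg _
  -- local LYM step
  have hd_succ : ∀ k, k < n → d k ≤ d (k + 1) := by
    intro k hk
    set A : Finset (Finset V) := {S ∈ F | S.card = k} with hA
    have sizedA : (A : Set (Finset V)).Sized k := fun S hS => (mem_filter.1 hS).2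
    have sizedB : ((Aᶜˢ : Finset (Finset V)) : Set (Finset V)).Sized (n - k) := by
      have := sizedA.compls
      rwa [← hn] at this
    have hlym := Finset.card_div_choose_le_card_shadow_div_choose (𝕜 := ℝ)
      (show n - k ≠ 0 by omega) sizedB
    rw [← hn] at hlym
    have hcompl_card : (Aᶜˢ).card = A.card := card_compls A
    have hshadow : (∂ (Aᶜˢ)).card = (∂⁺ A).card := by
      rw [shadow_compls, card_compls]
    have hsub : ∂⁺ A ⊆ {S ∈ F | S.card = k + 1} := by
      intro T hT
      obtain ⟨s, hs, a, ha, rfl⟩ := mem_upShadow_iff.1 hT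
      have hsF := (mem_filter.1 hs).1
      refine mem_filter.2 ⟨domSets_upset hsF (subset_insert a s), ?_⟩
      rw [card_insert_of_notMem ha, sizedA hs]
    have hcard_le : ((∂⁺ A).card : ℝ) ≤ f (k + 1) := by
      simp only [hf]
      exact_mod_cast card_le_card hsub
    have hsymm1 : n.choose (n - k) = n.choose k := Nat.choose_symm hk.le
    have hsymm2 : n.choose (n - k - 1) = n.choose (k + 1) := by
      rw [show n - k - 1 = n - (k + 1) by omega, Nat.choose_symm hk]
    rw [hcompl_card, hshadow, hsymm1, hsymm2] at hlym
    calc d k = f k / w k := rfl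
      _ ≤ ((∂⁺ A).card : ℝ) / w (k + 1) := hlym
      _ ≤ f (k + 1) / w (k + 1) := by
          have := hw_pos (k + 1) hk
          gcongr
      _ = d (k + 1) := rfl
  have hd_mono : ∀ k l, k ≤ l → l ≤ n → d k ≤ d l := by
    intro k l hkl
    induction l, hkl using Nat.le_induction with
    | base => intro _; exact le_rfl
    | succ m hm ih => intro hmn; exact (ih (by omega)).trans (hd_succ m (by omega))
  -- basic facts
  have hdn : d n = 1 := by
    have huniq : {S ∈ F | S.card = n} = {univ} := by
      ext S
      simp only [mem_filter, mem_singleton]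
      constructor
      · rintro ⟨hS, hcard⟩
        apply Finset.eq_univ_of_card
        omega
      · rintro rfl
        exact ⟨univ_mem_domSets, by rw [card_univ, ← hn]⟩
    simp [hd, hf, huniq, hwdef, Nat.choose_self]
  set R := Finset.Icc 1 n with hR
  have h1R : 1 ∈ R := mem_Icc.2 ⟨le_rfl, h1⟩
  have hnR : n ∈ R := mem_Icc.2 ⟨h1, le_rfl⟩
  have hnn : ∀ k ∈ R, ∀ l ∈ R, 0 ≤ w k * w l * ((d k - d l) * ((k : ℝ) - l)) := by
    intro k hk l hl
    rw [hR, mem_Icc] at hk hl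
    have hwk := (hw_pos k hk.2).le
    have hwl := (hw_pos l hl.2).le
    rcases le_total k l with h | h
    · have hdkl := hd_mono k l h hl.2
      have hkl : (k : ℝ) ≤ l := by exact_mod_cast h
      have h0 := mul_nonneg (neg_nonneg.2 (sub_nonpos.2 hdkl)) (neg_nonneg.2 (sub_nonpos.2 hkl))
      rw [neg_mul_neg] at h0
      exact mul_nonneg (mul_nonneg hwk hwl) h0
    · have hdkl := hd_mono l k h hk.2
      have hkl : (l : ℝ) ≤ k := by exact_mod_cast h
      exact mul_nonneg (mul_nonneg hwk hwl)
        (mul_nonneg (sub_nonneg.2 hdkl) (sub_nonneg.2 hkl))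
  -- identify the four sums
  have hwd : ∀ k ∈ R, w k * d k = f k := by
    intro k hk
    rw [hR, mem_Icc] at hk
    rw [hd, mul_comm, div_mul_cancel₀ _ (ne_of_gt (hw_pos k hk.2))]
  have hmem : ∀ S ∈ F, S.card ∈ R := by
    intro S hS
    have hpos : 0 < S.card := by
      rcases Finset.eq_empty_or_nonempty S with rfl | hSne
      · exact absurd hS empty_notMem_domSets
      · exact card_pos.2 hSne
    exact mem_Icc.2 ⟨hpos, hn ▸ S.card_le_univ⟩
  have hP1 : ∑ k ∈ R, w k = (2 : ℝ) ^ n - 1 := by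
    have h01 : (0 : ℕ) ∉ R := by simp [hR]
    have hins : insert 0 R = Finset.range (n + 1) := by
      ext k
      simp only [hR, Finset.mem_insert, Finset.mem_Icc, Finset.mem_range]
      omega
    have hall : ∑ k ∈ range (n + 1), w k = (2 : ℝ) ^ n := by
      simp only [hwdef]
      rw [← Nat.cast_sum, Nat.sum_range_choose]
      push_cast
      ring
    have := Finset.sum_insert h01 (f := w)
    rw [hins, hall] at this
    have hw0 : w 0 = 1 := by simp [hwdef]
    linarith [this]
  have hP3 : ∑ k ∈ R, w k * k = (n : ℝ) * 2 ^ (n - 1) := by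
    have h01 : (0 : ℕ) ∉ R := by simp [hR]
    have hins : insert 0 R = Finset.range (n + 1) := by
      ext k
      simp only [hR, Finset.mem_insert, Finset.mem_Icc, Finset.mem_range]
      omega
    have hall : ∑ k ∈ range (n + 1), w k * k = (n : ℝ) * 2 ^ (n - 1) := by
      simp only [hwdef]
      calc ∑ k ∈ range (n + 1), ((n.choose k : ℕ) : ℝ) * k
          = ((∑ k ∈ range (n + 1), k * n.choose k : ℕ) : ℝ) := by
            push_cast
            exact sum_congr rfl fun k _ => by ring
        _ = ((n * 2 ^ (n - 1) : ℕ) : ℝ) := by rw [sum_id_mul_choose]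
        _ = (n : ℝ) * 2 ^ (n - 1) := by push_cast; ring
    have := Finset.sum_insert h01 (f := fun k => w k * (k : ℝ))
    rw [hins, hall] at this
    simp only [Nat.cast_zero, mul_zero, zero_add] at this
    linarith [this]
  have hP2 : ∑ k ∈ R, w k * d k = (F.card : ℝ) := by
    calc ∑ k ∈ R, w k * d k = ∑ k ∈ R, f k := sum_congr rfl hwd
      _ = ((∑ k ∈ R, ({S ∈ F | S.card = k} : Finset (Finset V)).card : ℕ) : ℝ) := by
          rw [Nat.cast_sum]
      _ = (F.card : ℝ) := by rw [← Finset.card_eq_sum_card_fiberwise hmem]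
  have hP4 : ∑ k ∈ R, w k * d k * k = ∑ S ∈ F, (S.card : ℝ) := by
    calc ∑ k ∈ R, w k * d k * k = ∑ k ∈ R, f k * k :=
        sum_congr rfl fun k hk => by rw [hwd k hk]
      _ = ∑ k ∈ R, ∑ S ∈ ({S ∈ F | S.card = k} : Finset (Finset V)), (S.card : ℝ) := by
          refine sum_congr rfl fun k hk => ?_
          rw [Finset.sum_congr rfl fun S hS => by rw [(mem_filter.1 hS).2], sum_const,
            nsmul_eq_mul]
      _ = ∑ S ∈ F, (S.card : ℝ) := Finset.sum_fiberwise_of_maps_to hmem _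
  constructor
  · have h0 := cheb_aux R w d 1 1 h1R h1R hnn
    rw [hP1, hP2, hP3, hP4] at h0
    simp only [sub_self, mul_zero, zero_mul] at h0
    nlinarith [h0]
  · rintro ⟨v, u, hvu, hadj⟩
    have hnontriv : Nontrivial V := ⟨⟨v, u, hvu⟩⟩
    have hn2 : 2 ≤ n := by rw [hn]; exact Fintype.one_lt_card
    have hvnot : ({v} : Finset V) ∉ F := by
      rw [hF, mem_domSets]
      intro h
      rcases h u with h' | ⟨x, hx, ha⟩
      · exact hvu (mem_singleton.1 h').symm
      · rw [mem_singleton] at hx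
        subst hx
        exact hadj ha
    have hf1 : f 1 ≤ (n : ℝ) - 1 := by
      have hsub : ({S ∈ F | S.card = 1} : Finset (Finset V)) ⊆
          (univ.erase v).image (fun x => ({x} : Finset V)) := by
        intro S hS
        obtain ⟨hSF, hS1⟩ := mem_filter.1 hS
        obtain ⟨x, rfl⟩ := card_eq_one.1 hS1
        refine mem_image.2 ⟨x, mem_erase.2 ⟨?_, mem_univ x⟩, rfl⟩
        rintro rfl
        exact hvnot hSF
      have hle := card_le_card hsub
      have himg : ((univ.erase v).image (fun x => ({x} : Finset V))).card = n - 1 := by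
        rw [Finset.card_image_of_injective _ Finset.singleton_injective,
          card_erase_of_mem (mem_univ v), card_univ, ← hn]
      rw [himg] at hle
      calc f 1 ≤ ((n - 1 : ℕ) : ℝ) := by simp only [hf]; exact_mod_cast hle
        _ = (n : ℝ) - 1 := by rw [Nat.cast_sub h1]; norm_num
    have hw1 : w 1 = (n : ℝ) := by simp [hwdef]
    have hwn : w n = 1 := by simp [hwdef]
    have hnpos : (0 : ℝ) < n := by exact_mod_cast h1
    have hd1lt : d 1 < 1 := by
      have : d 1 = f 1 / (n : ℝ) := by rw [hd]; simp [hwdef]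
      rw [this, div_lt_one hnpos]
      linarith
    have hstrict := cheb_aux R w d 1 n h1R hnR hnn
    rw [hP1, hP2, hP3, hP4, hw1, hwn, hdn] at hstrict
    have hnr : (2 : ℝ) ≤ n := by exact_mod_cast hn2
    have hterm : 0 < (n : ℝ) * 1 * ((d 1 - 1) * (((1 : ℕ) : ℝ) - n)) := by
      push_cast
      have h2 : 0 < (1 - d 1) * ((n : ℝ) - 1) := mul_pos (by linarith) (by linarith)
      calc (0 : ℝ) < (n : ℝ) * ((1 - d 1) * ((n : ℝ) - 1)) := mul_pos hnpos h2
        _ = (n : ℝ) * 1 * ((d 1 - 1) * (1 - (n : ℝ))) := by ring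
    nlinarith [hstrict, hterm]



lemma domSets_top (hne : Nonempty V) :
    (⊤ : SimpleGraph V).domSets = (univ : Finset V).powerset.erase ∅ := by
  ext S
  rw [mem_domSets, Finset.mem_erase, Finset.mem_powerset]
  constructor
  · intro h
    refine ⟨?_, S.subset_univ⟩
    obtain ⟨v⟩ := hne
    rcases h v with hv | ⟨u, hu, _⟩
    · exact fun he => by simp [he] at hv
    · exact fun he => by simp [he] at hu
  · rintro ⟨hne', -⟩
    intro v
    obtain ⟨u, hu⟩ := Finset.nonempty_iff_ne_empty.2 hne'
    by_cases hv : v ∈ S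
    · exact Or.inl hv
    · exact Or.inr ⟨u, hu, fun he => hv (he ▸ hu)⟩

lemma avd_top (n : ℕ) (hn : n = Fintype.card V) (h1 : 1 ≤ n) :
    (⊤ : SimpleGraph V).avd = ((n : ℝ) * 2 ^ (n - 1)) / ((2 : ℝ) ^ n - 1) := by
  have hne : Nonempty V := Fintype.card_pos_iff.1 (by omega)
  rw [SimpleGraph.avd, domSets_top hne]
  have hcard : ((univ : Finset V).powerset.erase ∅).card = 2 ^ n - 1 := by
    rw [card_erase_of_mem (Finset.empty_mem_powerset _), Finset.card_powerset, card_univ, ← hn]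
  have hsum : ∑ S ∈ (univ : Finset V).powerset.erase ∅, ((S.card : ℝ)) =
      (n : ℝ) * 2 ^ (n - 1) := by
    rw [Finset.sum_erase _ (by simp)]
    have := Finset.sum_powerset_apply_card (fun m => (m : ℝ)) (x := (univ : Finset V))
    rw [this, card_univ, ← hn]
    calc ∑ m ∈ range (n + 1), n.choose m • (m : ℝ)
        = ((∑ m ∈ range (n + 1), m * n.choose m : ℕ) : ℝ) := by
          push_cast
          exact sum_congr rfl fun m _ => by rw [nsmul_eq_mul]; ring
      _ = ((n * 2 ^ (n - 1) : ℕ) : ℝ) := by rw [sum_id_mul_choose]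
      _ = (n : ℝ) * 2 ^ (n - 1) := by push_cast; ring
  rw [hsum, hcard]
  congr 1
  have : (1 : ℕ) ≤ 2 ^ n := Nat.one_le_two_pow
  push_cast [Nat.cast_sub this]
  ring

lemma iso_top_iff (G : SimpleGraph V) (n : ℕ) (hn : n = Fintype.card V) :
    Nonempty (G ≃g (⊤ : SimpleGraph (Fin n))) ↔ G = ⊤ := by
  constructor
  · rintro ⟨e⟩
    ext u v
    rw [SimpleGraph.top_adj]
    rw [← e.map_rel_iff]
    simp only [SimpleGraph.top_adj, ne_eq, EmbeddingLike.apply_eq_iff_eq]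
  · rintro rfl
    have hcard : Fintype.card V = Fintype.card (Fin n) := by rw [Fintype.card_fin, hn]
    obtain ⟨e⟩ := Fintype.card_eq.1 hcard
    exact ⟨⟨e, by simp⟩⟩

end Aux

theorem avd_lower_bound {V : Type*} [Fintype V] (G : SimpleGraph V) (n : ℕ)
    (hn : n = Fintype.card V) (h1 : 1 ≤ n) :
    ((n : ℝ) * 2 ^ (n - 1)) / (2 ^ n - 1) ≤ G.avd ∧
      (G.avd = ((n : ℝ) * 2 ^ (n - 1)) / (2 ^ n - 1) ↔
        Nonempty (G ≃g (⊤ : SimpleGraph (Fin n)))) := by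
  letI := Classical.decEq V
  have h2pow : (1 : ℝ) < 2 ^ n :=
    calc (1 : ℝ) < 2 := one_lt_two
      _ ≤ 2 ^ n := le_self_pow₀ (by norm_num) (by omega)
  have hFpos : (0 : ℝ) < (G.domSets.card : ℝ) := by
    have : G.domSets.Nonempty := ⟨univ, univ_mem_domSets⟩
    exact_mod_cast card_pos.2 this
  by_cases hG : G = (⊤ : SimpleGraph V)
  · subst hG
    have heq := avd_top n hn h1
    exact ⟨le_of_eq heq.symm, ⟨fun _ => (iso_top_iff _ n hn).2 rfl, fun _ => heq⟩⟩
  · have hex : ∃ v w : V, v ≠ w ∧ ¬G.Adj v w := by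
      by_contra h
      push_neg at h
      apply hG
      ext u v
      rw [SimpleGraph.top_adj]
      exact ⟨fun ha => ha.ne, fun hne => h u v hne⟩
    have hkey := (avd_key G n hn h1).2 hex
    have hstrict : ((n : ℝ) * 2 ^ (n - 1)) / (2 ^ n - 1) < G.avd := by
      rw [SimpleGraph.avd, div_lt_div_iff₀ (by linarith) hFpos]
      linarith [hkey]
    exact ⟨hstrict.le, ⟨fun heq => absurd heq.symm (ne_of_lt hstrict),
      fun hiso => absurd ((iso_top_iff G n hn).1 hiso) hG⟩⟩
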